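/- Let x, y be vectors in ℝ^n. Then y is majorised by x in the sense of Hardy–Littlewood–Pólya (the sum of the k largest entries of y is at most that of x for every k, with equality for k = n) if and only if y lies in the convex hull of the set of all coordinate permutations of x. -/

import Mathlib

open Finset

/-- Sum of the `k` largest entries of `x`: the supremum of sums over subsets of cardinality `k`. -/
noncomputable def topSum {n : ℕ} (x : Fin n → ℝ) (k : ℕ) : ℝ :=
  sSup {S : ℝ | ∃ A : Finset (Fin n), A.card = k ∧ S = ∑ i ∈ A, x i}

namespace HLP

variable {n : ℕ}

lemma sumsOf_finite (x : Fin n → ℝ) (k : ℕ) :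
    {S : ℝ | ∃ A : Finset (Fin n), A.card = k ∧ S = ∑ i ∈ A, x i}.Finite := by
  have h : {S : ℝ | ∃ A : Finset (Fin n), A.card = k ∧ S = ∑ i ∈ A, x i}
      ⊆ Set.range (fun A : Finset (Fin n) => ∑ i ∈ A, x i) := by
    rintro S ⟨A, -, rfl⟩; exact ⟨A, rfl⟩
  exact (Set.finite_range _).subset h

lemma sumsOf_nonempty (x : Fin n → ℝ) {k : ℕ} (hk : k ≤ n) :
    {S : ℝ | ∃ A : Finset (Fin n), A.card = k ∧ S = ∑ i ∈ A, x i}.Nonempty := by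
  obtain ⟨A, -, hA⟩ := Finset.exists_subset_card_eq (s := (Finset.univ : Finset (Fin n))) (n := k) (by simpa)
  exact ⟨_, A, hA, rfl⟩

lemma le_topSum (x : Fin n → ℝ) {k : ℕ} {A : Finset (Fin n)} (hA : A.card = k) :
    ∑ i ∈ A, x i ≤ topSum x k :=
  le_csSup (sumsOf_finite x k).bddAbove ⟨A, hA, rfl⟩

lemma topSum_le (x : Fin n → ℝ) {k : ℕ} (hk : k ≤ n) {c : ℝ}
    (h : ∀ A : Finset (Fin n), A.card = k → ∑ i ∈ A, x i ≤ c) : topSum x k ≤ c := by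
  refine csSup_le (sumsOf_nonempty x hk) ?_
  rintro S ⟨A, hA, rfl⟩; exact h A hA

lemma exists_topSum (x : Fin n → ℝ) {k : ℕ} (hk : k ≤ n) :
    ∃ A : Finset (Fin n), A.card = k ∧ topSum x k = ∑ i ∈ A, x i :=
  (sumsOf_nonempty x hk).csSup_mem (sumsOf_finite x k)

lemma topSum_univ (x : Fin n → ℝ) : topSum x n = ∑ i, x i := by
  refine le_antisymm (topSum_le x le_rfl ?_) (le_topSum x (by simp))
  intro A hA
  have : A = Finset.univ := by
    rw [← Finset.card_eq_iff_eq_univ]; simpa using hA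
  simp [this]

lemma topSum_perm (x : Fin n → ℝ) (σ : Equiv.Perm (Fin n)) (k : ℕ) :
    topSum (x ∘ σ) k = topSum x k := by
  have key : ∀ (z : Fin n → ℝ) (τ : Equiv.Perm (Fin n)),
      topSum (z ∘ τ) k ≤ topSum z k := by
    intro z τ
    rcases le_or_gt k n with hk | hk
    · refine topSum_le _ hk ?_
      intro A hA
      have hs : ∑ i ∈ A, (z ∘ τ) i = ∑ j ∈ A.image τ, z j := by
        rw [Finset.sum_image (fun a _ b _ h => τ.injective h)]; rfl
      rw [hs]
      exact le_topSum z (by rw [Finset.card_image_of_injective _ τ.injective, hA])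
    · have h1 : {S : ℝ | ∃ A : Finset (Fin n), A.card = k ∧ S = ∑ i ∈ A, (z ∘ τ) i} = ∅ := by
        ext S; simp only [Set.mem_setOf_eq, Set.mem_empty_iff_false, iff_false]
        rintro ⟨A, hA, -⟩
        exact absurd (hA ▸ A.card_le_univ) (by simpa using hk.not_ge)
      have h2 : {S : ℝ | ∃ A : Finset (Fin n), A.card = k ∧ S = ∑ i ∈ A, z i} = ∅ := by
        ext S; simp only [Set.mem_setOf_eq, Set.mem_empty_iff_false, iff_false]
        rintro ⟨A, hA, -⟩
        exact absurd (hA ▸ A.card_le_univ) (by simpa using hk.not_ge)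
      simp only [topSum]
      rw [h1, h2]
  refine le_antisymm (key x σ) ?_
  have := key (x ∘ σ) σ⁻¹
  have hxx : (x ∘ σ) ∘ (σ⁻¹ : Equiv.Perm (Fin n)) = x := by
    funext i; simp
  rwa [hxx] at this



variable {n : ℕ}

lemma exists_antitone_perm (x : Fin n → ℝ) :
    ∃ τ : Equiv.Perm (Fin n), Antitone (x ∘ τ) := by
  refine ⟨Equiv.trans Fin.revPerm (Tuple.sort x), ?_⟩
  have hrev : Antitone (Fin.rev : Fin n → Fin n) := fun i j h => Fin.rev_le_rev.2 h
  have : x ∘ (Equiv.trans Fin.revPerm (Tuple.sort x)) = (x ∘ Tuple.sort x) ∘ Fin.rev := rfl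
  rw [this]
  exact (Tuple.monotone_sort x).comp_antitone hrev

lemma le_orderEmbOfFin {k : ℕ} (B : Finset (Fin n)) (hB : B.card = k) (i : Fin k) :
    (i : ℕ) ≤ (B.orderEmbOfFin hB i : ℕ) := by
  obtain ⟨m, hm⟩ := i
  induction m with
  | zero => exact Nat.zero_le _
  | succ p ih =>
    have hp : p < k := Nat.lt_of_succ_lt hm
    have h1 : B.orderEmbOfFin hB ⟨p, hp⟩ < B.orderEmbOfFin hB ⟨p + 1, hm⟩ :=
      (B.orderEmbOfFin hB).strictMono (by simp [Fin.lt_def])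
    exact Nat.succ_le_of_lt (lt_of_le_of_lt (ih hp) h1)

lemma sorted_sum_bound {w : Fin n → ℝ} (hw : Antitone w) {k : ℕ} (hk : k ≤ n)
    {B : Finset (Fin n)} (hB : B.card = k) :
    ∑ j ∈ B, w j ≤ ∑ i : Fin k, w (Fin.castLE hk i) := by
  have hBe : B = Finset.image (B.orderEmbOfFin hB) Finset.univ := by
    ext j
    simp only [Finset.mem_image, Finset.mem_univ, true_and]
    constructor
    · intro hj
      have : j ∈ Set.range (B.orderEmbOfFin hB) := by
        rw [Finset.range_orderEmbOfFin]; exact hj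
      obtain ⟨i, hi⟩ := this; exact ⟨i, hi⟩
    · rintro ⟨i, rfl⟩; exact Finset.orderEmbOfFin_mem B hB i
  rw [hBe, Finset.sum_image (fun a _ b _ h => (B.orderEmbOfFin hB).injective h)]
  refine Finset.sum_le_sum fun i _ => ?_
  exact hw (by rw [Fin.le_def]; simpa using le_orderEmbOfFin B hB i)

lemma topSum_sorted (x : Fin n → ℝ) {τ : Equiv.Perm (Fin n)} (hτ : Antitone (x ∘ τ))
    {k : ℕ} (hk : k ≤ n) :
    topSum x k = ∑ i : Fin k, (x ∘ τ) (Fin.castLE hk i) := by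
  refine le_antisymm (topSum_le x hk ?_) ?_
  · intro A hA
    have hs : ∑ i ∈ A, x i = ∑ j ∈ A.image τ.symm, (x ∘ τ) j := by
      rw [Finset.sum_image (fun a _ b _ h => τ.symm.injective h)]
      refine Finset.sum_congr rfl fun a _ => ?_
      simp
    rw [hs]
    exact sorted_sum_bound hτ hk
      (by rw [Finset.card_image_of_injective _ τ.symm.injective, hA])
  · have hinj : Function.Injective (fun i : Fin k => τ (Fin.castLE hk i)) :=
      τ.injective.comp (Fin.castLE_injective hk)
    have hcard : (Finset.image (fun i : Fin k => τ (Fin.castLE hk i)) Finset.univ).card = k := by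
      rw [Finset.card_image_of_injective _ hinj]; simp
    have := le_topSum x hcard
    rwa [Finset.sum_image (fun a _ b _ h => hinj h)] at this

lemma abel_nonneg (c D : ℕ → ℝ) (m : ℕ) (hc : ∀ k, k + 1 < m → c (k + 1) ≤ c k)
    (hD : ∀ k ≤ m, 0 ≤ D k) (hD0 : D 0 = 0) (hDm : D m = 0) :
    0 ≤ ∑ k ∈ Finset.range m, c k * (D (k + 1) - D k) := by
  rcases Nat.eq_zero_or_pos m with rfl | hm
  · simp
  obtain ⟨p, rfl⟩ := Nat.exists_eq_succ_of_ne_zero hm.ne'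
  have h1 : ∑ k ∈ Finset.range (p + 1), c k * D (k + 1)
      = ∑ k ∈ Finset.range p, c k * D (k + 1) := by
    rw [Finset.sum_range_succ, hDm]; ring
  have h2 : ∑ k ∈ Finset.range (p + 1), c k * D k
      = ∑ k ∈ Finset.range p, c (k + 1) * D (k + 1) := by
    rw [Finset.sum_range_succ']; simp [hD0]
  have h3 : ∑ k ∈ Finset.range (p + 1), c k * (D (k + 1) - D k)
      = ∑ k ∈ Finset.range p, (c k - c (k + 1)) * D (k + 1) := by
    simp only [mul_sub, Finset.sum_sub_distrib, h1, h2, sub_mul]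
  rw [h3]
  refine Finset.sum_nonneg fun k hk => ?_
  rw [Finset.mem_range] at hk
  exact mul_nonneg (sub_nonneg.2 (hc k (by omega))) (hD (k + 1) (by omega))

lemma topSum_eq_range {u : Fin n → ℝ} {τ : Equiv.Perm (Fin n)} (hτ : Antitone (u ∘ τ))
    {k : ℕ} (hk : k ≤ n) :
    topSum u k = ∑ j ∈ Finset.range k,
      (fun j => if h : j < n then (u ∘ τ) ⟨j, h⟩ else 0) j := by
  rw [topSum_sorted u hτ hk, ← Fin.sum_univ_eq_sum_range]
  refine Finset.sum_congr rfl fun i _ => ?_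
  have hi : (i : ℕ) < n := lt_of_lt_of_le i.2 hk
  simp only [dif_pos hi]
  rfl

lemma sorted_inner_le {x y c : Fin n → ℝ} {τc τx τy : Equiv.Perm (Fin n)}
    (hc : Antitone (c ∘ τc)) (hx : Antitone (x ∘ τx)) (hy : Antitone (y ∘ τy))
    (hle : ∀ k ≤ n, topSum y k ≤ topSum x k) (heq : topSum y n = topSum x n) :
    ∑ i, (c ∘ τc) i * (y ∘ τy) i ≤ ∑ i, (c ∘ τc) i * (x ∘ τx) i := by
  classical
  set c' : ℕ → ℝ := fun j => if h : j < n then (c ∘ τc) ⟨j, h⟩ else 0 with hc'def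
  set x' : ℕ → ℝ := fun j => if h : j < n then (x ∘ τx) ⟨j, h⟩ else 0 with hx'def
  set y' : ℕ → ℝ := fun j => if h : j < n then (y ∘ τy) ⟨j, h⟩ else 0 with hy'def
  set D : ℕ → ℝ := fun k => (∑ j ∈ Finset.range k, x' j) - (∑ j ∈ Finset.range k, y' j)
    with hDdef
  have hDk : ∀ k ≤ n, D k = topSum x k - topSum y k := by
    intro k hk
    rw [hDdef]
    rw [topSum_eq_range hx hk, topSum_eq_range hy hk]
  have habel : 0 ≤ ∑ k ∈ Finset.range n, c' k * (D (k + 1) - D k) := by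
    refine abel_nonneg c' D n ?_ ?_ (by simp [hDdef]) ?_
    · intro k hk
      have h1 : k < n := by omega
      rw [hc'def]
      simp only [dif_pos hk, dif_pos h1]
      exact hc (by simp [Fin.le_def])
    · intro k hk
      rw [hDk k hk]
      exact sub_nonneg.2 (hle k hk)
    · rw [hDk n le_rfl, heq]; ring
  have hstep : ∀ k, D (k + 1) - D k = x' k - y' k := by
    intro k
    rw [hDdef]
    simp only [Finset.sum_range_succ]
    ring
  simp only [hstep, mul_sub, Finset.sum_sub_distrib, sub_nonneg] at habel
  have hxs : ∑ i, (c ∘ τc) i * (x ∘ τx) i = ∑ k ∈ Finset.range n, c' k * x' k := by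
    rw [← Fin.sum_univ_eq_sum_range (fun k => c' k * x' k) n]
    refine Finset.sum_congr rfl fun i _ => ?_
    rw [hc'def, hx'def]
    simp only [dif_pos i.2]
  have hys : ∑ i, (c ∘ τc) i * (y ∘ τy) i = ∑ k ∈ Finset.range n, c' k * y' k := by
    rw [← Fin.sum_univ_eq_sum_range (fun k => c' k * y' k) n]
    refine Finset.sum_congr rfl fun i _ => ?_
    rw [hc'def, hy'def]
    simp only [dif_pos i.2]
  rw [hxs, hys]
  exact habel

end HLP


/-- Hardy–Littlewood–Pólya majorisation of vectors. -/
def Majorised {n : ℕ} (y x : Fin n → ℝ) : Prop :=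
  (∀ k ≤ n, topSum y k ≤ topSum x k) ∧ topSum y n = topSum x n

/-- The set of coordinate permutations of `x`. -/
def permSet {n : ℕ} (x : Fin n → ℝ) : Set (Fin n → ℝ) :=
  {z | ∃ σ : Equiv.Perm (Fin n), z = x ∘ σ}

theorem majorised_iff_mem_convexHull_permutations {n : ℕ} (x y : Fin n → ℝ) :
    Majorised y x ↔ y ∈ convexHull ℝ (permSet x) := by
  constructor
  · -- hard direction: majorised → in convex hull, by separation
    intro hmaj
    by_contra hy
    have hfin : (permSet x).Finite := by
      have hps : permSet x = Set.range (fun σ : Equiv.Perm (Fin n) => x ∘ σ) := by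
        ext z; exact ⟨fun ⟨σ, h⟩ => ⟨σ, h.symm⟩, fun ⟨σ, h⟩ => ⟨σ, h.symm⟩⟩
      rw [hps]; exact Set.finite_range _
    obtain ⟨f, u, hfu, huy⟩ := geometric_hahn_banach_closed_point
      (convex_convexHull ℝ _) (hfin.isCompact_convexHull (𝕜 := ℝ)).isClosed hy
    set c : Fin n → ℝ := fun i => f (fun j => if i = j then (1 : ℝ) else 0) with hcdef
    have hf : ∀ z : Fin n → ℝ, f z = ∑ i, c i * z i := by
      intro z
      calc f z = f (∑ i, z i • fun j => if i = j then (1 : ℝ) else 0) := by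
            rw [← pi_eq_sum_univ z]
        _ = ∑ i, f (z i • fun j => if i = j then (1 : ℝ) else 0) := map_sum f _ _
        _ = ∑ i, c i * z i := by
            refine Finset.sum_congr rfl fun i _ => ?_
            rw [f.map_smul, hcdef, smul_eq_mul, mul_comm]
    obtain ⟨τc, hτc⟩ := HLP.exists_antitone_perm c
    obtain ⟨τx, hτx⟩ := HLP.exists_antitone_perm x
    obtain ⟨τy, hτy⟩ := HLP.exists_antitone_perm y
    -- Step A : rearrangement
    have hA : ∑ i, c i * y i ≤ ∑ i, (c ∘ τc) i * (y ∘ τy) i := by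
      have h1 : ∑ i, c i * y i
          = ∑ j, (c ∘ τc) j * (y ∘ τy) ((τc.trans τy.symm) j) := by
        rw [← Equiv.sum_comp τc (fun i => c i * y i)]
        refine Finset.sum_congr rfl fun j _ => ?_
        simp [Function.comp]
      rw [h1]
      exact Monovary.sum_mul_comp_perm_le_sum_mul (hτc.monovary hτy)
    -- Step B : Abel summation with majorisation
    have hB : ∑ i, (c ∘ τc) i * (y ∘ τy) i ≤ ∑ i, (c ∘ τc) i * (x ∘ τx) i :=
      HLP.sorted_inner_le hτc hτx hτy hmaj.1 hmaj.2
    -- Step C : identify the RHS with a permutation of x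
    have hC : ∑ i, (c ∘ τc) i * (x ∘ τx) i = ∑ i, c i * (x ∘ (τc.symm.trans τx)) i := by
      rw [← Equiv.sum_comp τc (fun i => c i * (x ∘ (τc.symm.trans τx)) i)]
      refine Finset.sum_congr rfl fun j _ => ?_
      simp [Function.comp]
    have hmem : (x ∘ (τc.symm.trans τx)) ∈ convexHull ℝ (permSet x) :=
      subset_convexHull ℝ _ ⟨τc.symm.trans τx, rfl⟩
    have hlt : f (x ∘ (τc.symm.trans τx)) < u := hfu _ hmem
    have hfy : f y ≤ f (x ∘ (τc.symm.trans τx)) := by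
      rw [hf, hf]
      exact le_trans hA (le_trans hB (le_of_eq hC))
    linarith
  · -- easy direction
    intro hy
    have hsub : convexHull ℝ (permSet x) ⊆ {z | Majorised z x} := by
      refine convexHull_min ?_ ?_
      · rintro z ⟨σ, rfl⟩
        exact ⟨fun k _ => le_of_eq (HLP.topSum_perm x σ k), HLP.topSum_perm x σ n⟩
      · intro z hz w hw a b ha hb hab
        have hzw : ∀ A : Finset (Fin n),
            ∑ i ∈ A, (a • z + b • w) i = a * ∑ i ∈ A, z i + b * ∑ i ∈ A, w i := by
          intro A
          simp [Finset.sum_add_distrib, Finset.mul_sum]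
        constructor
        · intro k hk
          refine HLP.topSum_le _ hk fun A hA => ?_
          rw [hzw A]
          calc a * ∑ i ∈ A, z i + b * ∑ i ∈ A, w i
              ≤ a * topSum z k + b * topSum w k :=
                add_le_add (mul_le_mul_of_nonneg_left (HLP.le_topSum z hA) ha)
                  (mul_le_mul_of_nonneg_left (HLP.le_topSum w hA) hb)
            _ ≤ a * topSum x k + b * topSum x k :=
                add_le_add (mul_le_mul_of_nonneg_left (hz.1 k hk) ha)
                  (mul_le_mul_of_nonneg_left (hw.1 k hk) hb)
            _ = topSum x k := by rw [← add_mul, hab, one_mul]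
        · have hz2 := hz.2
          have hw2 := hw.2
          rw [HLP.topSum_univ, HLP.topSum_univ] at hz2 hw2
          rw [HLP.topSum_univ, HLP.topSum_univ, hzw Finset.univ, hz2, hw2, ← add_mul, hab,
            one_mul]
    exact hsub hy
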